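/- Suppose the memory kernel satisfies the exponential decay bound |K(s)| ≤ (R₀/θ) e^{−s/θ} for all s ≥ T₁, where R₀ > 0 and θ > 0. Then |Z_exp(ω) − Z(ω)| ≤ (T₁/(T₂−T₁))·R₀·(1 + θ/T₁)·e^{−T₁/θ} + R₀ e^{−T₂/θ}. -/

import Mathlib

open Real Complex MeasureTheory intervalIntegral

lemma aux_sin_exp (ω t s : ℝ) :
    2 * Complex.I * (Real.sin (ω * (t - s)) : ℂ) * Complex.exp (-Complex.I * ω * t)
      = Complex.exp (-Complex.I * ω * s)
        - Complex.exp (Complex.I * ω * s) * Complex.exp (-2 * Complex.I * ω * t) := by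
  have h1 : Complex.exp (((ω * (t - s) : ℝ) : ℂ) * Complex.I) * Complex.exp (-Complex.I * ω * t)
      = Complex.exp (-Complex.I * ω * s) := by
    rw [← Complex.exp_add]; congr 1; push_cast; ring
  have h2 : Complex.exp (-((ω * (t - s) : ℝ) : ℂ) * Complex.I) * Complex.exp (-Complex.I * ω * t)
      = Complex.exp (Complex.I * ω * s) * Complex.exp (-2 * Complex.I * ω * t) := by
    rw [← Complex.exp_add, ← Complex.exp_add]; congr 1; push_cast; ring
  rw [Complex.ofReal_sin, Complex.sin]
  linear_combination h1 - h2 + (Complex.exp (-((ω * (t - s) : ℝ) : ℂ) * Complex.I)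
    - Complex.exp (((ω * (t - s) : ℝ) : ℂ) * Complex.I))
      * Complex.exp (-Complex.I * ω * t) * Complex.I_sq

lemma aux_exp_interval (θ : ℝ) (hθ : 0 < θ) (a b : ℝ) :
    ∫ t in a..b, Real.exp (-t / θ) = θ * Real.exp (-a / θ) - θ * Real.exp (-b / θ) := by
  have hprim : ∀ x : ℝ, HasDerivAt (fun t => -θ * Real.exp (-t / θ)) (Real.exp (-x / θ)) x := by
    intro x
    have h0 : HasDerivAt (fun t : ℝ => -t / θ) (-1 / θ) x := by
      simpa using ((hasDerivAt_id x).neg.div_const θ)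
    have h1 := (Real.hasDerivAt_exp (-x / θ)).comp x h0
    have h2 := h1.const_mul (-θ)
    refine h2.congr_deriv ?_
    field_simp
  rw [intervalIntegral.integral_eq_sub_of_hasDerivAt (fun x _ => hprim x)]
  · ring
  · apply Continuous.intervalIntegrable
    fun_prop

lemma aux_exp_Ioi (θ : ℝ) (hθ : 0 < θ) (t : ℝ) :
    ∫ s in Set.Ioi t, Real.exp (-s / θ) = θ * Real.exp (-t / θ) := by
  have h := MeasureTheory.integral_comp_mul_right_Ioi (fun x => Real.exp (-x)) t
    (inv_pos.mpr hθ)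
  simp only [← div_eq_mul_inv] at h
  have h2 : (fun s : ℝ => Real.exp (-s / θ)) = fun s : ℝ => Real.exp (-(s / θ)) := by
    funext s; rw [neg_div]
  rw [h2]
  rw [h, integral_exp_neg_Ioi, smul_eq_mul]
  rw [inv_inv, neg_div]

lemma aux_exp_neg_integrable (θ : ℝ) (hθ : 0 < θ) (t : ℝ) :
    IntegrableOn (fun s => Real.exp (-s / θ)) (Set.Ioi t) := by
  have h2 : (fun s : ℝ => Real.exp (-s / θ)) = fun s : ℝ => Real.exp (-(1/θ) * s) := by
    funext s; congr 1; ring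
  rw [h2]
  exact exp_neg_integrableOn_Ioi t (by positivity)

lemma aux_triangle_swap {a b : ℝ} (c : ℂ) (g : ℝ → ℂ)
    (hg : IntegrableOn g (Set.Ioc a b)) :
    ∫ t in Set.Ioc a b, Complex.exp (c * t) * (∫ s in Set.Ioc a t, g s)
      = ∫ s in Set.Ioc a b, g s * (∫ t in Set.Icc s b, Complex.exp (c * t)) := by
  set μ := volume.restrict (Set.Ioc a b) with hμ
  have hfin : IsFiniteMeasure μ := by
    constructor
    rw [hμ, Measure.restrict_apply_univ]
    exact measure_Ioc_lt_top
  set φ : ℝ × ℝ → ℂ :=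
    Set.indicator {p : ℝ × ℝ | p.2 ≤ p.1} (fun p => Complex.exp (c * p.1) * g p.2) with hφ
  have hbase : Integrable (fun p : ℝ × ℝ => Complex.exp (c * p.1) * g p.2) (μ.prod μ) := by
    exact Integrable.mul_prod (f := fun t : ℝ => Complex.exp (c * t)) (g := g)
      (Complex.continuous_exp.comp (by fun_prop)).integrableOn_Ioc hg
  have hφint : Integrable φ (μ.prod μ) :=
    hbase.indicator (measurableSet_le measurable_snd measurable_fst)
  have hswap := MeasureTheory.integral_integral_swap (f := fun t s => φ (t, s))
    (μ := μ) (ν := μ) hφint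
  have hL : ∀ t ∈ Set.Ioc a b,
      (∫ s, φ (t, s) ∂μ) = Complex.exp (c * t) * ∫ s in Set.Ioc a t, g s := by
    intro t ht
    have h1 : (fun s => φ (t, s)) = Set.indicator (Set.Iic t) (fun s => Complex.exp (c * t) * g s) := by
      funext s
      by_cases h : s ≤ t <;>
        simp [hφ, Set.indicator, h, Set.mem_Iic, Set.mem_setOf_eq]
    rw [h1, MeasureTheory.integral_indicator measurableSet_Iic, hμ,
      Measure.restrict_restrict measurableSet_Iic]
    have h2 : Set.Iic t ∩ Set.Ioc a b = Set.Ioc a t := by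
      ext x
      simp only [Set.mem_inter_iff, Set.mem_Iic, Set.mem_Ioc]
      constructor
      · rintro ⟨h1', h2', _⟩; exact ⟨h2', h1'⟩
      · rintro ⟨h1', h2'⟩; exact ⟨h2', h1', h2'.trans ht.2⟩
    rw [h2, MeasureTheory.integral_const_mul]
  have hR : ∀ s ∈ Set.Ioc a b,
      (∫ t, φ (t, s) ∂μ) = g s * ∫ t in Set.Icc s b, Complex.exp (c * t) := by
    intro s hs
    have h1 : (fun t => φ (t, s)) = Set.indicator (Set.Ici s) (fun t => Complex.exp (c * t) * g s) := by
      funext t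
      by_cases h : s ≤ t <;>
        simp [hφ, Set.indicator, h, Set.mem_Ici, Set.mem_setOf_eq]
    rw [h1, MeasureTheory.integral_indicator measurableSet_Ici, hμ,
      Measure.restrict_restrict measurableSet_Ici]
    have h2 : Set.Ici s ∩ Set.Ioc a b = Set.Icc s b := by
      ext x
      simp only [Set.mem_inter_iff, Set.mem_Ici, Set.mem_Ioc, Set.mem_Icc]
      constructor
      · rintro ⟨h1', _, h3'⟩; exact ⟨h1', h3'⟩
      · rintro ⟨h1', h2'⟩; exact ⟨h1', hs.1.trans_le h1', h2'⟩
    rw [h2, MeasureTheory.integral_mul_const, mul_comm]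
  calc ∫ t in Set.Ioc a b, Complex.exp (c * t) * (∫ s in Set.Ioc a t, g s)
      = ∫ t, (∫ s, φ (t, s) ∂μ) ∂μ := by
        rw [hμ]
        exact (setIntegral_congr_fun measurableSet_Ioc fun t ht => (hL t ht).symm)
    _ = ∫ s, (∫ t, φ (t, s) ∂μ) ∂μ := hswap
    _ = ∫ s in Set.Ioc a b, g s * (∫ t in Set.Icc s b, Complex.exp (c * t)) := by
        rw [hμ]
        exact setIntegral_congr_fun measurableSet_Ioc fun s hs => hR s hs
set_option maxHeartbeats 1000000 in
/-- **Theorem 2 (error estimate for the experimentally measured impedance).**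
For an LTI system with memory kernel `K` decaying exponentially for `s ≥ T₁`,
the impedance `Z_exp` measured over the window `[T₁, T₂]`, `T₁ = 2πn₁/ω`,
`T₂ = 2πn₂/ω`, satisfies
`|Z_exp - Z| ≤ (T₁/(T₂-T₁)) R₀ (1 + θ/T₁) e^{-T₁/θ} + R₀ e^{-T₂/θ}`. -/
theorem experimental_impedance_error_estimate
    (ω : ℝ) (hω : 0 < ω) (n₁ n₂ : ℕ) (hn₁ : 0 < n₁) (hn : n₁ < n₂)
    (T₁ T₂ : ℝ) (hT₁ : T₁ = 2 * π * n₁ / ω) (hT₂ : T₂ = 2 * π * n₂ / ω)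
    (ρ₀ R₀ θ : ℝ) (hR₀ : 0 < R₀) (hθ : 0 < θ)
    (K : ℝ → ℝ) (hKmeas : Measurable K)
    (hKint : IntegrableOn (fun s => (1 + s) * |K s|) (Set.Ioi (0 : ℝ)))
    (hdecay : ∀ s, T₁ ≤ s → |K s| ≤ R₀ / θ * Real.exp (-s / θ))
    (U : ℝ → ℝ)
    (hU : ∀ t, U t = ρ₀ * Real.sin (ω * t) + ∫ s in (0 : ℝ)..t, K s * Real.sin (ω * (t - s)))
    (Zexp Z : ℂ)
    (hZexp : Zexp = 2 * Complex.I / ((T₂ : ℂ) - T₁) *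
      ∫ t in T₁..T₂, (U t : ℂ) * Complex.exp (-Complex.I * ω * t))
    (hZ : Z = (ρ₀ : ℂ) + ∫ s in Set.Ioi (0 : ℝ), (K s : ℂ) * Complex.exp (-Complex.I * ω * s)) :
    ‖Zexp - Z‖ ≤
      T₁ / (T₂ - T₁) * R₀ * (1 + θ / T₁) * Real.exp (-T₁ / θ) +
        R₀ * Real.exp (-T₂ / θ) := by
  have hπ := Real.pi_pos
  have hT1pos : 0 < T₁ := by
    rw [hT₁]; positivity
  have h12 : T₁ < T₂ := by
    have hcast : (n₁:ℝ) < (n₂:ℝ) := by exact_mod_cast hn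
    rw [hT₁, hT₂]
    gcongr
  have hΔ : 0 < T₂ - T₁ := sub_pos.mpr h12
  have hT1T2 : T₁ ≤ T₂ := h12.le
  have h0T1 : (0:ℝ) ≤ T₁ := hT1pos.le
  have h0T2 : (0:ℝ) ≤ T₂ := h0T1.trans hT1T2
  have hωT₁ : ω * T₁ = 2 * π * n₁ := by rw [hT₁]; field_simp
  have hωT₂ : ω * T₂ = 2 * π * n₂ := by rw [hT₂]; field_simp
  -- norms of imaginary exponentials
  have hnorm : ∀ z : ℂ, z.re = 0 → ‖Complex.exp z‖ = 1 := by
    intro z hz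
    rw [Complex.norm_exp, hz, Real.exp_zero]
  have hnormI : ∀ (c : ℂ), c.re = 0 → ∀ x : ℝ, ‖Complex.exp (c * x)‖ = 1 := by
    intro c hc x
    exact hnorm _ (by simp [Complex.mul_re, hc])
  -- integrability of K
  have hKabs : IntegrableOn (fun s => |K s|) (Set.Ioi (0:ℝ)) := by
    apply hKint.mono' hKmeas.abs.aestronglyMeasurable
    filter_upwards [ae_restrict_mem measurableSet_Ioi] with s hs
    have h1 : (0:ℝ) < s := hs
    have := abs_nonneg (K s)
    rw [Real.norm_eq_abs, _root_.abs_abs]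
    nlinarith
  have hKreal : ∀ {u : Set ℝ}, u ⊆ Set.Ioi (0:ℝ) → IntegrableOn K u := by
    intro u hu
    exact (hKabs.mono_set hu).mono' hKmeas.aestronglyMeasurable
      (ae_of_all _ fun x => le_of_eq (Real.norm_eq_abs _))
  have hgint : ∀ (c : ℂ), c.re = 0 → ∀ {u : Set ℝ}, u ⊆ Set.Ioi (0:ℝ) →
      IntegrableOn (fun x => (K x : ℂ) * Complex.exp (c * x)) u := by
    intro c hc u hu
    have h1 : IntegrableOn (fun x => ((K x : ℝ) : ℂ)) u := (hKreal hu).ofReal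
    have h2 := h1.bdd_mul (f := fun x : ℝ => Complex.exp (c * x))
      (Complex.continuous_exp.comp (by fun_prop)).aestronglyMeasurable
      (ae_of_all _ fun x => (hnormI c hc x).le)
    simpa [mul_comm, IntegrableOn] using h2
  have hrem : (-Complex.I * (ω:ℂ)).re = 0 := by simp
  have hrep : (Complex.I * (ω:ℂ)).re = 0 := by simp
  have hre2 : (-2 * Complex.I * (ω:ℂ)).re = 0 := by simp
  have hc2ne : (-2 * Complex.I * (ω:ℂ)) ≠ 0 := by
    simp [Complex.ext_iff, hω.ne']
  -- names
  set gm : ℝ → ℂ := fun s => (K s : ℂ) * Complex.exp (-Complex.I * ω * s) with hgm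
  set gp : ℝ → ℂ := fun s => (K s : ℂ) * Complex.exp (Complex.I * ω * s) with hgp
  set F : ℝ → ℂ := fun x => ∫ s in (0:ℝ)..x, gm s with hF
  set Hf : ℝ → ℂ := fun x => ∫ s in (0:ℝ)..x, gp s with hHf
  set G : ℂ := ∫ s in Set.Ioi (0:ℝ), gm s with hG
  -- pointwise identity for U
  have hU2 : ∀ t, 0 ≤ t →
      (U t : ℂ) * Complex.exp (-Complex.I * ω * t) * (2 * Complex.I)
        = (ρ₀ : ℂ) * (1 - Complex.exp (-2 * Complex.I * ω * t))
          + F t - Complex.exp (-2 * Complex.I * ω * t) * Hf t := by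
    intro t ht
    have hsub1 : Set.Ioc (0:ℝ) t ⊆ Set.Ioi 0 := Set.Ioc_subset_Ioi_self
    have hgmI : IntervalIntegrable gm volume 0 t := by
      rw [intervalIntegrable_iff_integrableOn_Ioc_of_le ht]
      exact hgint _ hrem hsub1
    have hgpI : IntervalIntegrable gp volume 0 t := by
      rw [intervalIntegrable_iff_integrableOn_Ioc_of_le ht]
      exact hgint _ hrep hsub1
    have expand : (Complex.ofReal (∫ s in (0:ℝ)..t, K s * Real.sin (ω * (t - s))))
        * (Complex.exp (-Complex.I * ω * t) * (2 * Complex.I))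
        = F t - Complex.exp (-2 * Complex.I * ω * t) * Hf t := by
      rw [← intervalIntegral.integral_ofReal (f := fun s => K s * Real.sin (ω * (t - s))),
        ← intervalIntegral.integral_mul_const]
      rw [intervalIntegral.integral_congr
        (g := fun s => gm s - Complex.exp (-2 * Complex.I * ω * t) * gp s)
        (fun s _ => by
          have h := aux_sin_exp ω t s
          push_cast at h ⊢
          linear_combination ((K s : ℂ)) * h)]
      rw [intervalIntegral.integral_sub hgmI (hgpI.const_mul _),
        intervalIntegral.integral_const_mul]
    have hsin0 : (Real.sin (ω * t) : ℂ) * (Complex.exp (-Complex.I * ω * t) * (2 * Complex.I))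
        = 1 - Complex.exp (-2 * Complex.I * ω * t) := by
      have h := aux_sin_exp ω t 0
      simp only [sub_zero, Complex.ofReal_zero, mul_zero, Complex.exp_zero, one_mul] at h
      linear_combination h
    rw [hU t]
    push_cast at hsin0 expand ⊢
    linear_combination (ρ₀ : ℂ) * hsin0 + expand
  -- continuity of primitives
  have hsub12 : Set.uIcc T₁ T₂ ⊆ Set.uIcc (0:ℝ) T₂ := by
    rw [Set.uIcc_of_le hT1T2, Set.uIcc_of_le h0T2]
    exact Set.Icc_subset_Icc h0T1 le_rfl
  have hIoc02 : Set.Ioc (0:ℝ) T₂ ⊆ Set.Ioi 0 := Set.Ioc_subset_Ioi_self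
  have hIoc12 : Set.Ioc T₁ T₂ ⊆ Set.Ioi (0:ℝ) := fun x hx => lt_trans hT1pos hx.1
  have hgmu : IntegrableOn gm (Set.uIcc (0:ℝ) T₂) := by
    rw [Set.uIcc_of_le h0T2, integrableOn_Icc_iff_integrableOn_Ioc]
    exact hgint _ hrem hIoc02
  have hgpu : IntegrableOn gp (Set.uIcc (0:ℝ) T₂) := by
    rw [Set.uIcc_of_le h0T2, integrableOn_Icc_iff_integrableOn_Ioc]
    exact hgint _ hrep hIoc02
  have hFcont : ContinuousOn F (Set.uIcc T₁ T₂) :=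
    (intervalIntegral.continuousOn_primitive_interval hgmu).mono hsub12
  have hHcont : ContinuousOn Hf (Set.uIcc T₁ T₂) :=
    (intervalIntegral.continuousOn_primitive_interval hgpu).mono hsub12
  have he2cont : Continuous (fun t : ℝ => Complex.exp (-2 * Complex.I * ω * t)) := by
    fun_prop
  have hFint : IntervalIntegrable F volume T₁ T₂ := hFcont.intervalIntegrable
  have he2H : IntervalIntegrable (fun t => Complex.exp (-2 * Complex.I * ω * t) * Hf t)
      volume T₁ T₂ := (he2cont.continuousOn.mul hHcont).intervalIntegrable
  -- the oscillatory exponential integrates to zero over whole periods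
  have hexp1 : ∀ (n : ℕ) (T : ℝ), ω * T = 2 * π * n →
      Complex.exp (-2 * Complex.I * ω * T) = 1 := by
    intro n T h
    have hc : ((ω:ℂ) * (T:ℂ)) = 2 * (π:ℂ) * (n:ℂ) := by
      have := congrArg (fun x : ℝ => (x : ℂ)) h
      push_cast at this
      exact this
    have harg : (-2 * Complex.I * (ω:ℂ)) * (T:ℂ)
        = ((-2 * (n:ℤ) : ℤ) : ℂ) * (2 * (π:ℂ) * Complex.I) := by
      push_cast
      linear_combination (-2 * Complex.I) * hc
    rw [show -2 * Complex.I * (ω:ℂ) * (T:ℂ) = (-2 * Complex.I * (ω:ℂ)) * (T:ℂ) from rfl,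
      harg, Complex.exp_int_mul_two_pi_mul_I]
  have he2int : (∫ t in T₁..T₂, Complex.exp (-2 * Complex.I * ω * t)) = 0 := by
    rw [integral_exp_mul_complex hc2ne, hexp1 n₂ T₂ hωT₂, hexp1 n₁ T₁ hωT₁,
      sub_self, zero_div]
  -- main integral identity
  have hJ : (∫ t in T₁..T₂, (U t : ℂ) * Complex.exp (-Complex.I * ω * t)) * (2 * Complex.I)
      = (ρ₀:ℂ) * ((T₂:ℂ) - (T₁:ℂ)) + (∫ t in T₁..T₂, F t)
        - (∫ t in T₁..T₂, Complex.exp (-2 * Complex.I * ω * t) * Hf t) := by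
    rw [← intervalIntegral.integral_mul_const]
    rw [intervalIntegral.integral_congr
      (g := fun t => (ρ₀:ℂ) * (1 - Complex.exp (-2 * Complex.I * ω * t)) + F t
        - Complex.exp (-2 * Complex.I * ω * t) * Hf t)
      (fun t ht => hU2 t (by
        rw [Set.uIcc_of_le hT1T2] at ht
        exact h0T1.trans ht.1))]
    have hc1 : IntervalIntegrable
        (fun t => (ρ₀:ℂ) * (1 - Complex.exp (-2 * Complex.I * ω * t))) volume T₁ T₂ :=
      (continuous_const.mul (continuous_const.sub he2cont)).intervalIntegrable _ _
    rw [intervalIntegral.integral_sub (hc1.add hFint) he2H,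
      intervalIntegral.integral_add hc1 hFint,
      intervalIntegral.integral_const_mul,
      intervalIntegral.integral_sub (intervalIntegrable_const) (he2cont.intervalIntegrable _ _),
      he2int, intervalIntegral.integral_const]
    simp only [Complex.real_smul, sub_zero]
    push_cast
    ring
  -- split Hf at T₁ and kill the constant part
  have hgpI01 : IntervalIntegrable gp volume 0 T₁ := by
    rw [intervalIntegrable_iff_integrableOn_Ioc_of_le h0T1]
    exact hgint _ hrep Set.Ioc_subset_Ioi_self
  have hgpI1t : ∀ t, T₁ ≤ t → IntervalIntegrable gp volume T₁ t := by
    intro t h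
    rw [intervalIntegrable_iff_integrableOn_Ioc_of_le h]
    exact hgint _ hrep (fun x hx => lt_trans hT1pos hx.1)
  have hH2cont : ContinuousOn (fun t => ∫ s in T₁..t, gp s) (Set.uIcc T₁ T₂) := by
    apply intervalIntegral.continuousOn_primitive_interval
    rw [Set.uIcc_of_le hT1T2, integrableOn_Icc_iff_integrableOn_Ioc]
    exact hgint _ hrep hIoc12
  have hBsplit : (∫ t in T₁..T₂, Complex.exp (-2 * Complex.I * ω * t) * Hf t)
      = ∫ t in T₁..T₂, Complex.exp (-2 * Complex.I * ω * t) * (∫ s in T₁..t, gp s) := by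
    rw [intervalIntegral.integral_congr
      (g := fun t => Complex.exp (-2 * Complex.I * ω * t) * (∫ s in (0:ℝ)..T₁, gp s)
        + Complex.exp (-2 * Complex.I * ω * t) * (∫ s in T₁..t, gp s))
      (fun t ht => by
        have h1 : T₁ ≤ t := by rw [Set.uIcc_of_le hT1T2] at ht; exact ht.1
        simp only [hHf]
        rw [← mul_add, intervalIntegral.integral_add_adjacent_intervals hgpI01 (hgpI1t t h1)])]
    rw [intervalIntegral.integral_add
      (f := fun t => Complex.exp (-2 * Complex.I * ω * t) * (∫ s in (0:ℝ)..T₁, gp s))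
      (g := fun t => Complex.exp (-2 * Complex.I * ω * t) * (∫ s in T₁..t, gp s))
      ((he2cont.mul continuous_const).intervalIntegrable _ _)
      ((he2cont.continuousOn.mul hH2cont).intervalIntegrable),
      intervalIntegral.integral_mul_const, he2int, zero_mul, zero_add]
  -- Fubini swap for the oscillatory part
  have hgpIoc12 : IntegrableOn gp (Set.Ioc T₁ T₂) := hgint _ hrep hIoc12
  have hB' : (∫ t in T₁..T₂, Complex.exp (-2 * Complex.I * ω * t) * (∫ s in T₁..t, gp s))
      = ∫ s in Set.Ioc T₁ T₂,
          gp s * ((Complex.exp (-2 * Complex.I * ω * T₂)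
            - Complex.exp (-2 * Complex.I * ω * s)) / (-2 * Complex.I * ω)) := by
    rw [intervalIntegral.integral_of_le hT1T2]
    rw [MeasureTheory.setIntegral_congr_fun measurableSet_Ioc
      (g := fun t : ℝ => Complex.exp (-2 * Complex.I * ω * t) * (∫ s in Set.Ioc T₁ t, gp s))
      (fun t ht => by rw [intervalIntegral.integral_of_le ht.1.le])]
    rw [aux_triangle_swap (-2 * Complex.I * (ω:ℂ)) gp hgpIoc12]
    apply MeasureTheory.setIntegral_congr_fun measurableSet_Ioc
    intro s hs
    dsimp only
    rw [MeasureTheory.integral_Icc_eq_integral_Ioc, ← intervalIntegral.integral_of_le hs.2,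
      integral_exp_mul_complex hc2ne]
  -- bounds
  have hE12 : Real.exp (-T₂ / θ) ≤ Real.exp (-T₁ / θ) := by
    apply Real.exp_le_exp.mpr
    have : T₁ / θ ≤ T₂ / θ := by gcongr
    rw [neg_div, neg_div]
    linarith
  have hKIoc12 : IntegrableOn (fun s => |K s|) (Set.Ioc T₁ T₂) := hKabs.mono_set hIoc12
  have hKbound : (∫ s in Set.Ioc T₁ T₂, |K s|)
      ≤ R₀ * (Real.exp (-T₁ / θ) - Real.exp (-T₂ / θ)) := by
    have step1 : (∫ s in Set.Ioc T₁ T₂, |K s|)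
        ≤ ∫ s in Set.Ioc T₁ T₂, R₀ / θ * Real.exp (-s / θ) := by
      apply MeasureTheory.setIntegral_mono_on hKIoc12
        ((continuous_const.mul (by fun_prop)).integrableOn_Ioc) measurableSet_Ioc
      exact fun s hs => hdecay s hs.1.le
    have step2 : (∫ s in Set.Ioc T₁ T₂, R₀ / θ * Real.exp (-s / θ))
        = R₀ * (Real.exp (-T₁ / θ) - Real.exp (-T₂ / θ)) := by
      rw [MeasureTheory.integral_const_mul, ← intervalIntegral.integral_of_le hT1T2,
        aux_exp_interval θ hθ]
      field_simp
    linarith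
  have hinnerb : ∀ s : ℝ,
      ‖(Complex.exp (-2 * Complex.I * ω * (T₂:ℝ)) - Complex.exp (-2 * Complex.I * ω * s))
        / (-2 * Complex.I * (ω:ℂ))‖ ≤ 1 / ω := by
    intro s
    rw [norm_div]
    have h1 : ‖Complex.exp (-2 * Complex.I * ω * (T₂:ℝ))
        - Complex.exp (-2 * Complex.I * ω * s)‖ ≤ 2 := by
      refine (norm_sub_le _ _).trans ?_
      rw [hnormI _ hre2 T₂, hnormI _ hre2 s]; norm_num
    have h2 : ‖(-2 * Complex.I * (ω:ℂ))‖ = 2 * ω := by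
      simp [norm_mul, abs_of_pos hω]
    rw [h2]
    rw [div_le_div_iff₀ (by positivity) hω]
    nlinarith
  have hW : Continuous (fun s : ℝ => Complex.exp (Complex.I * ω * s)
      * ((Complex.exp (-2 * Complex.I * ω * (T₂:ℝ)) - Complex.exp (-2 * Complex.I * ω * s))
        / (-2 * Complex.I * (ω:ℂ)))) := by fun_prop
  have hWb : ∀ s : ℝ, ‖Complex.exp (Complex.I * ω * s)
      * ((Complex.exp (-2 * Complex.I * ω * (T₂:ℝ)) - Complex.exp (-2 * Complex.I * ω * s))
        / (-2 * Complex.I * (ω:ℂ)))‖ ≤ 1 / ω := by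
    intro s
    rw [norm_mul, hnormI _ hrep s, one_mul]
    exact hinnerb s
  have hprod_int : IntegrableOn (fun s => gp s
      * ((Complex.exp (-2 * Complex.I * ω * (T₂:ℝ)) - Complex.exp (-2 * Complex.I * ω * s))
        / (-2 * Complex.I * (ω:ℂ)))) (Set.Ioc T₁ T₂) := by
    have h1 : IntegrableOn (fun x => ((K x : ℝ) : ℂ)) (Set.Ioc T₁ T₂) := (hKreal hIoc12).ofReal
    have h2 := h1.bdd_mul hW.aestronglyMeasurable (ae_of_all _ hWb)
    exact h2.congr (ae_of_all _ fun x => by simp only [hgp]; ring)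
  have hnormB : ‖∫ s in Set.Ioc T₁ T₂, gp s
      * ((Complex.exp (-2 * Complex.I * ω * (T₂:ℝ)) - Complex.exp (-2 * Complex.I * ω * s))
        / (-2 * Complex.I * (ω:ℂ)))‖
      ≤ (R₀ * (Real.exp (-T₁ / θ) - Real.exp (-T₂ / θ))) * (1 / ω) := by
    refine (MeasureTheory.norm_integral_le_integral_norm _).trans ?_
    have step1 : (∫ s in Set.Ioc T₁ T₂, ‖gp s
        * ((Complex.exp (-2 * Complex.I * ω * (T₂:ℝ)) - Complex.exp (-2 * Complex.I * ω * s))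
          / (-2 * Complex.I * (ω:ℂ)))‖)
        ≤ ∫ s in Set.Ioc T₁ T₂, |K s| * (1 / ω) := by
      apply MeasureTheory.setIntegral_mono_on hprod_int.norm (hKIoc12.mul_const _)
        measurableSet_Ioc
      intro s _
      rw [norm_mul]
      have hgpn : ‖gp s‖ = |K s| := by
        simp only [hgp]
        rw [norm_mul, hnormI _ hrep s, mul_one, Complex.norm_real, Real.norm_eq_abs]
      rw [hgpn]
      exact mul_le_mul_of_nonneg_left (hinnerb s) (abs_nonneg _)
    refine step1.trans ?_
    rw [MeasureTheory.integral_mul_const]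
    have := hKbound
    gcongr
  -- bound ‖F t - G‖
  have hFG : ∀ t ∈ Set.Icc T₁ T₂, ‖F t - G‖ ≤ R₀ * Real.exp (-t / θ) := by
    intro t ht
    have h0t : (0:ℝ) ≤ t := h0T1.trans ht.1
    have hIoit : Set.Ioi t ⊆ Set.Ioi (0:ℝ) := fun x hx => lt_of_le_of_lt h0t hx
    have hsplitG : G = (∫ s in Set.Ioc 0 t, gm s) + ∫ s in Set.Ioi t, gm s := by
      rw [hG, ← Set.Ioc_union_Ioi_eq_Ioi h0t,
        MeasureTheory.setIntegral_union (Set.Ioc_disjoint_Ioi le_rfl) measurableSet_Ioi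
          (hgint _ hrem Set.Ioc_subset_Ioi_self) (hgint _ hrem hIoit)]
    have hFt : F t = ∫ s in Set.Ioc 0 t, gm s := by
      simp only [hF]
      exact intervalIntegral.integral_of_le h0t
    have hdiff : F t - G = -(∫ s in Set.Ioi t, gm s) := by
      rw [hsplitG, hFt]; ring
    rw [hdiff, norm_neg]
    have step1 : ‖∫ s in Set.Ioi t, gm s‖ ≤ ∫ s in Set.Ioi t, |K s| := by
      refine (MeasureTheory.norm_integral_le_integral_norm _).trans ?_
      apply le_of_eq
      apply MeasureTheory.setIntegral_congr_fun measurableSet_Ioi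
      intro s _
      simp only [hgm]
      rw [norm_mul, hnormI _ hrem s, mul_one, Complex.norm_real, Real.norm_eq_abs]
    refine step1.trans ?_
    have step2 : (∫ s in Set.Ioi t, |K s|)
        ≤ ∫ s in Set.Ioi t, R₀ / θ * Real.exp (-s / θ) := by
      apply MeasureTheory.setIntegral_mono_on (hKabs.mono_set hIoit)
        ((aux_exp_neg_integrable θ hθ t).const_mul _) measurableSet_Ioi
      intro s hs
      exact hdecay s (ht.1.trans hs.le)
    refine step2.trans ?_
    rw [MeasureTheory.integral_const_mul, aux_exp_Ioi θ hθ]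
    apply le_of_eq
    field_simp
  -- bound the first error term
  have hAG : ‖(∫ t in T₁..T₂, F t) - ((T₂:ℂ) - (T₁:ℂ)) * G‖
      ≤ R₀ * (θ * Real.exp (-T₁ / θ) - θ * Real.exp (-T₂ / θ)) := by
    have h1 : (∫ t in T₁..T₂, F t) - ((T₂:ℂ) - (T₁:ℂ)) * G = ∫ t in T₁..T₂, (F t - G) := by
      rw [intervalIntegral.integral_sub hFint intervalIntegrable_const,
        intervalIntegral.integral_const]
      congr 1
      rw [Complex.real_smul]
      push_cast
      ring
    rw [h1]
    refine (intervalIntegral.norm_integral_le_integral_norm hT1T2).trans ?_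
    have h2 : (∫ t in T₁..T₂, ‖F t - G‖) ≤ ∫ t in T₁..T₂, R₀ * Real.exp (-t / θ) := by
      apply intervalIntegral.integral_mono_on hT1T2
        ((hFcont.sub continuousOn_const).norm.intervalIntegrable)
        ((continuous_const.mul (by fun_prop)).intervalIntegrable _ _)
      intro x hx
      exact hFG x hx
    refine h2.trans (le_of_eq ?_)
    rw [intervalIntegral.integral_const_mul, aux_exp_interval θ hθ]
  -- assemble
  have hΔc : ((T₂:ℂ) - (T₁:ℂ)) ≠ 0 := by
    rw [sub_ne_zero]
    exact fun h => h12.ne' (by exact_mod_cast h)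
  have hZZ : Zexp - Z = ((∫ t in T₁..T₂, F t) - ((T₂:ℂ) - (T₁:ℂ)) * G
      - (∫ t in T₁..T₂, Complex.exp (-2 * Complex.I * ω * t) * Hf t)) / ((T₂:ℂ) - (T₁:ℂ)) := by
    have h2I : (2 * Complex.I) ≠ 0 := by simp [Complex.ext_iff]
    have hJ' : (∫ t in T₁..T₂, (U t : ℂ) * Complex.exp (-Complex.I * ω * t))
        = ((ρ₀:ℂ) * ((T₂:ℂ) - (T₁:ℂ)) + (∫ t in T₁..T₂, F t)
          - (∫ t in T₁..T₂, Complex.exp (-2 * Complex.I * ω * t) * Hf t)) / (2 * Complex.I) := by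
      rw [eq_div_iff h2I]
      exact hJ
    rw [hZexp, hZ, hJ']
    field_simp
    ring
  have hnd : ‖((T₂:ℂ) - (T₁:ℂ))‖ = T₂ - T₁ := by
    rw [show ((T₂:ℂ) - (T₁:ℂ)) = ((T₂ - T₁ : ℝ) : ℂ) by push_cast; ring,
      Complex.norm_real, Real.norm_eq_abs, abs_of_pos hΔ]
  have hωT : 1 / ω ≤ T₁ := by
    have hn1 : (1:ℝ) ≤ (n₁:ℝ) := by exact_mod_cast hn₁
    have : (1:ℝ) ≤ 2 * π * n₁ := by nlinarith [Real.pi_gt_three]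
    rw [hT₁]
    gcongr
  have hnum : ‖(∫ t in T₁..T₂, F t) - ((T₂:ℂ) - (T₁:ℂ)) * G
      - (∫ t in T₁..T₂, Complex.exp (-2 * Complex.I * ω * t) * Hf t)‖
      ≤ (θ + T₁) * R₀ * Real.exp (-T₁ / θ) := by
    refine (norm_sub_le _ _).trans ?_
    rw [hBsplit, hB']
    have hb2 : ‖∫ s in Set.Ioc T₁ T₂, gp s
        * ((Complex.exp (-2 * Complex.I * ω * (T₂:ℝ)) - Complex.exp (-2 * Complex.I * ω * s))
          / (-2 * Complex.I * (ω:ℂ)))‖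
        ≤ T₁ * (R₀ * (Real.exp (-T₁ / θ) - Real.exp (-T₂ / θ))) := by
      refine hnormB.trans ?_
      have hge : (0:ℝ) ≤ R₀ * (Real.exp (-T₁ / θ) - Real.exp (-T₂ / θ)) := by nlinarith
      calc R₀ * (Real.exp (-T₁ / θ) - Real.exp (-T₂ / θ)) * (1 / ω)
          ≤ R₀ * (Real.exp (-T₁ / θ) - Real.exp (-T₂ / θ)) * T₁ :=
            mul_le_mul_of_nonneg_left hωT hge
        _ = T₁ * (R₀ * (Real.exp (-T₁ / θ) - Real.exp (-T₂ / θ))) := by ring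
    have hb1 := hAG
    have h1' : (0:ℝ) ≤ θ * R₀ * Real.exp (-T₂ / θ) := by positivity
    have h2' : (0:ℝ) ≤ T₁ * R₀ * Real.exp (-T₂ / θ) := by positivity
    nlinarith [hb1, hb2]
  rw [hZZ, norm_div, hnd]
  have hkey : T₁ / (T₂ - T₁) * R₀ * (1 + θ / T₁) * Real.exp (-T₁ / θ)
      = (θ + T₁) * R₀ * Real.exp (-T₁ / θ) / (T₂ - T₁) := by
    field_simp
    ring
  rw [hkey]
  have h1 : ‖(∫ t in T₁..T₂, F t) - ((T₂:ℂ) - (T₁:ℂ)) * G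
      - (∫ t in T₁..T₂, Complex.exp (-2 * Complex.I * ω * t) * Hf t)‖ / (T₂ - T₁)
      ≤ (θ + T₁) * R₀ * Real.exp (-T₁ / θ) / (T₂ - T₁) := by
    gcongr
  refine h1.trans ?_
  have : 0 ≤ R₀ * Real.exp (-T₂ / θ) := by positivity
  linarith
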